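/- Let Γ₁ be the symmetric bilinear form on polynomials in (θ₁,θ₂) determined by Γ₁(θ₁,θ₁) = 1−θ₁², Γ₁(θ₁,θ₂) = −n θ₁θ₂, Γ₁(θ₂,θ₂) = n²((1−θ₁²)^{n−1} − θ₂²), extended by the chain rule. Then with P(θ₁,θ₂) = (1−θ₁²)ⁿ − θ₂², the polynomial P divides Γ₁(θᵢ,P) for i=1,2; specifically Γ₁(θ₁,P) = −2n θ₁ P and Γ₁(θ₂,P) = −2n² θ₂ P. -/
import Mathlib


open MvPolynomial

/-- For the biderivation `Γ₁` on `ℝ[θ₁,θ₂]` determined by its values on the generators,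
the chain rule gives `Γ₁(θᵢ, P) = ∑ⱼ Γ₁(θᵢ,θⱼ) ∂ⱼP`.  The boundary equations state that
`P` divides `Γ₁(θᵢ,P)`, with the explicit quotients below. -/
theorem stmt3 (n : ℕ) (hn : 1 ≤ n) :
    let θ₁ : MvPolynomial (Fin 2) ℝ := X 0
    let θ₂ : MvPolynomial (Fin 2) ℝ := X 1
    let g11 : MvPolynomial (Fin 2) ℝ := 1 - θ₁ ^ 2
    let g12 : MvPolynomial (Fin 2) ℝ := -(n : MvPolynomial (Fin 2) ℝ) * θ₁ * θ₂
    let g22 : MvPolynomial (Fin 2) ℝ :=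
      (n : MvPolynomial (Fin 2) ℝ) ^ 2 * ((1 - θ₁ ^ 2) ^ (n - 1) - θ₂ ^ 2)
    let P : MvPolynomial (Fin 2) ℝ := (1 - θ₁ ^ 2) ^ n - θ₂ ^ 2
    g11 * pderiv 0 P + g12 * pderiv 1 P = -2 * (n : MvPolynomial (Fin 2) ℝ) * θ₁ * P ∧
    g12 * pderiv 0 P + g22 * pderiv 1 P = -2 * (n : MvPolynomial (Fin 2) ℝ) ^ 2 * θ₂ * P := by
  obtain ⟨m, rfl⟩ : ∃ m, n = m + 1 := ⟨n - 1, (Nat.succ_pred_eq_of_pos hn).symm⟩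
  intro θ₁ θ₂ g11 g12 g22 P
  have h0 : pderiv (0 : Fin 2) P =
      -((m : MvPolynomial (Fin 2) ℝ) + 1) * (1 - θ₁ ^ 2) ^ m * (2 * θ₁) := by
    simp [P, θ₁, θ₂, pderiv_pow, Derivation.leibniz_pow]
    ring
  have h1 : pderiv (1 : Fin 2) P = -(2 * θ₂) := by
    simp [P, θ₁, θ₂, Derivation.leibniz_pow]
  constructor
  · rw [h0, h1]
    simp only [g11, g12, P, Nat.add_sub_cancel, Nat.cast_add, Nat.cast_one, pow_succ]
    ring
  · rw [h0, h1]
    simp only [g12, g22, P, Nat.add_sub_cancel, Nat.cast_add, Nat.cast_one, pow_succ]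
    ring
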